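/- Consider the Evaluator Machine for α U_{[t1,t2]} β with 0 < t1 ≤ t2, whose queue evolves at each time step by: prepending M at index 0; if α is false, setting all cells in [0,t1−1] to ⊥; if β is true, setting all cells in [t1,t2] whose value is M to ⊤; if β is false, setting cell t2 to ⊥ if its value is M; if α∨β is false, setting all cells in [t1,t2−1] whose value is M to ⊥. Then for all i ≥ t2+1: Q^i[t2+1] = ⊤ iff there exists j ∈ [i−1−t2+t1, i−1] with β true at time j and α true at all k ∈ [i−1−t2, j−1]; and Q^i[t2+1] = ⊥ otherwise. -/
import Mathlib


/-- Queue cell values: `⊤`, `⊥`, or `Maybe`. -/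
inductive Cell : Type
  | top : Cell
  | bot : Cell
  | maybe : Cell
deriving DecidableEq

/-- `run step i` is the queue contents after performing the steps of times `0, 1, …, i`
starting from the empty queue. -/
def run (step : ℕ → List Cell → List Cell) : ℕ → List Cell
  | 0 => step 0 []
  | i + 1 => step (i + 1) (run step i)

/-- Set every cell with index in `[a, b]` to `v`. -/
def setRange (a b : ℕ) (v : Cell) (q : List Cell) : List Cell :=
  q.mapIdx fun j c => if a ≤ j ∧ j ≤ b then v else c

/-- Set the cell at index `k` to `v`, but only if its current value is `Maybe`. -/
def setIfMaybe (k : ℕ) (v : Cell) (q : List Cell) : List Cell :=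
  q.mapIdx fun j c => if j = k ∧ c = Cell.maybe then v else c

/-- Set every cell with index in `[a, b]` whose current value is `Maybe` to `v`. -/
def setRangeIfMaybe (a b : ℕ) (v : Cell) (q : List Cell) : List Cell :=
  q.mapIdx fun j c => if (a ≤ j ∧ j ≤ b) ∧ c = Cell.maybe then v else c

/-- One step of the Evaluator Machine for `α U_{[t1,t2]} β` at time `i`: prepend `Maybe`;
if `α` is false, set all cells in `[0, t1−1]` to `⊥`;
if `β` is true, set all `Maybe` cells in `[t1, t2]` to `⊤`;
if `β` is false, set the cell at index `t2` to `⊥` if it is `Maybe`;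
if `α ∨ β` is false, set all `Maybe` cells in `[t1, t2−1]` to `⊥`.
Cells at indices `> t2` are never modified. -/
def untilStep (α β : ℕ → Bool) (t1 t2 : ℕ) (i : ℕ) (q : List Cell) : List Cell :=
  let q0 := Cell.maybe :: q
  let q1 := if α i then q0 else setRange 0 (t1 - 1) Cell.bot q0
  let q2 := if β i then setRangeIfMaybe t1 t2 Cell.top q1 else setIfMaybe t2 Cell.bot q1
  if (α i || β i) then q2 else setRangeIfMaybe t1 (t2 - 1) Cell.bot q2

def stepCell (ai bi : Bool) (t1 t2 n : ℕ) (c : Cell) : Cell :=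
  let c1 := if ai then c else if 0 ≤ n ∧ n ≤ t1 - 1 then Cell.bot else c
  let c2 := if bi then (if (t1 ≤ n ∧ n ≤ t2) ∧ c1 = Cell.maybe then Cell.top else c1)
            else (if n = t2 ∧ c1 = Cell.maybe then Cell.bot else c1)
  if (ai || bi) then c2 else if (t1 ≤ n ∧ n ≤ t2 - 1) ∧ c2 = Cell.maybe then Cell.bot else c2

lemma untilStep_getElem? (α β : ℕ → Bool) (t1 t2 i n : ℕ) (q : List Cell) :
    (untilStep α β t1 t2 i q)[n]? =
      ((Cell.maybe :: q)[n]?).map (stepCell (α i) (β i) t1 t2 n) := by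
  simp only [untilStep, setRange, setIfMaybe, setRangeIfMaybe]
  cases hα : α i <;> cases hβ : β i <;>
    cases h : (Cell.maybe :: q)[n]? <;>
      simp [stepCell, hα, hβ, h, -List.mapIdx_cons]

/-- There is a witness for the until at `s`, observed up to time `m`. -/
def TopP (α β : ℕ → Bool) (t1 s m : ℕ) : Prop :=
  ∃ j, s + t1 ≤ j ∧ j ≤ m ∧ β j = true ∧ ∀ k, s ≤ k → k < j → α k = true

def AllA (α : ℕ → Bool) (s m : ℕ) : Prop := ∀ k, s ≤ k → k ≤ m → α k = true

open Classical in
noncomputable def cellVal (α β : ℕ → Bool) (t1 t2 s m : ℕ) : Cell :=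
  if TopP α β t1 s m then Cell.top
  else if AllA α s m ∧ m < s + t2 then Cell.maybe
  else Cell.bot

lemma stepCell_gt (ai bi : Bool) (t1 t2 n : ℕ) (c : Cell) (hn : t2 < n) (h12 : t1 ≤ t2) :
    stepCell ai bi t1 t2 n c = c := by
  have h1 : ¬ n ≤ t1 - 1 := by omega
  have h2 : ¬ (t1 ≤ n ∧ n ≤ t2) := by omega
  have h3 : n ≠ t2 := by omega
  have h4 : ¬ (t1 ≤ n ∧ n ≤ t2 - 1) := by omega
  cases ai <;> cases bi <;> simp [stepCell, h1, h2, h3, h4]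

lemma stepCell_new (α β : ℕ → Bool) (t1 t2 s : ℕ) (ht1 : 0 < t1) (h12 : t1 ≤ t2) :
    stepCell (α s) (β s) t1 t2 0 Cell.maybe = cellVal α β t1 t2 s s := by
  have hT : ¬ TopP α β t1 s s := by rintro ⟨j, hj1, hj2, -⟩; omega
  have hA : AllA α s s ↔ α s = true :=
    ⟨fun h => h s le_rfl le_rfl, fun h k h1 h2 => by
      have hk : k = s := by omega
      rw [hk]; exact h⟩
  cases hα : α s <;> cases hβ : β s <;>
    simp [stepCell, cellVal, hT, hA, hα, hβ, (by omega : 0 ≤ t1 - 1), (by omega : ¬ t1 ≤ 0),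
      (by omega : s < s + t2)] <;> omega

lemma TopP_succ (α β : ℕ → Bool) (t1 s m : ℕ) :
    TopP α β t1 s (m+1) ↔
      TopP α β t1 s m ∨ (β (m+1) = true ∧ s + t1 ≤ m+1 ∧ AllA α s m) := by
  constructor
  · rintro ⟨j, hj1, hj2, hb, ha⟩
    rcases Nat.lt_or_ge j (m+1) with h | h
    · exact Or.inl ⟨j, hj1, by omega, hb, ha⟩
    · have hj : j = m+1 := by omega
      subst hj
      exact Or.inr ⟨hb, hj1, fun k h1 h2 => ha k h1 (by omega)⟩
  · rintro (⟨j, hj1, hj2, hb, ha⟩ | ⟨hb, h1, hA⟩)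
    · exact ⟨j, hj1, by omega, hb, ha⟩
    · exact ⟨m+1, h1, le_rfl, hb, fun k hk1 hk2 => hA k hk1 (by omega)⟩

lemma AllA_succ (α : ℕ → Bool) (s m : ℕ) (h : s ≤ m + 1) :
    AllA α s (m+1) ↔ AllA α s m ∧ α (m+1) = true := by
  constructor
  · exact fun hA => ⟨fun k h1 h2 => hA k h1 (by omega), hA (m+1) h le_rfl⟩
  · rintro ⟨hA, ha⟩ k h1 h2
    rcases Nat.lt_or_ge k (m+1) with hk | hk
    · exact hA k h1 (by omega)
    · have : k = m+1 := by omega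
      rw [this]; exact ha

set_option maxHeartbeats 1000000 in
lemma stepCell_upd (α β : ℕ → Bool) (t1 t2 s m : ℕ) (ht1 : 0 < t1) (h12 : t1 ≤ t2)
    (hsm : s ≤ m) (hle : m + 1 ≤ s + t2) :
    stepCell (α (m+1)) (β (m+1)) t1 t2 (m + 1 - s) (cellVal α β t1 t2 s m) =
      cellVal α β t1 t2 s (m+1) := by
  set n := m + 1 - s with hn
  by_cases hT : TopP α β t1 s m
  · have hT' : TopP α β t1 s (m+1) := (TopP_succ α β t1 s m).2 (Or.inl hT)
    have hst : s + t1 ≤ m := by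
      obtain ⟨j, hj1, hj2, -⟩ := hT; omega
    rw [cellVal, if_pos hT, cellVal, if_pos hT']
    cases hα : α (m+1) <;> cases hβ : β (m+1) <;>
      (simp only [stepCell]; split_ifs <;> simp_all <;> omega)
  · by_cases hA : AllA α s m
    · have hmlt : m < s + t2 := by omega
      rw [cellVal, if_neg hT, if_pos ⟨hA, hmlt⟩]
      cases hα : α (m+1) <;> cases hβ : β (m+1) <;>
        (rw [cellVal, TopP_succ, AllA_succ α s m (by omega)]
         simp only [stepCell]
         split_ifs <;> simp_all <;> omega)
    · have hT' : ¬ TopP α β t1 s (m+1) := by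
        rw [TopP_succ]
        rintro (h | ⟨-, -, h⟩) <;> exact absurd h (by assumption)
      have hA' : ¬ (AllA α s (m+1) ∧ m + 1 < s + t2) := by
        rw [AllA_succ α s m (by omega)]
        rintro ⟨⟨h, -⟩, -⟩; exact hA h
      rw [cellVal, if_neg hT, if_neg (by rintro ⟨h, -⟩; exact hA h),
        cellVal, if_neg hT', if_neg hA']
      cases hα : α (m+1) <;> cases hβ : β (m+1) <;>
        (simp only [stepCell]; split_ifs <;> simp_all <;> omega)

lemma run_inv (α β : ℕ → Bool) (t1 t2 : ℕ) (ht1 : 0 < t1) (h12 : t1 ≤ t2) :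
    ∀ i n, n ≤ i → n ≤ t2 →
      (run (untilStep α β t1 t2) i)[n]? = some (cellVal α β t1 t2 (i - n) i)
  | 0, n, hn, hn2 => by
      have h0 : n = 0 := Nat.le_zero.1 hn
      subst h0
      rw [run, untilStep_getElem?]
      simp only [List.getElem?_cons_zero, Option.map_some, Nat.sub_zero]
      rw [stepCell_new α β t1 t2 0 ht1 h12]
  | (i+1), n, hn, hn2 => by
      rw [run, untilStep_getElem?]
      cases n with
      | zero =>
        simp only [List.getElem?_cons_zero, Option.map_some, Nat.sub_zero]
        rw [stepCell_new α β t1 t2 (i+1) ht1 h12]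
      | succ k =>
        have hk : k ≤ i := by omega
        simp only [List.getElem?_cons_succ]
        rw [run_inv α β t1 t2 ht1 h12 i k hk (by omega)]
        simp only [Option.map_some]
        have h1 : i + 1 - (k+1) = i - k := by omega
        rw [h1]
        have h2 : (k : ℕ) + 1 = i + 1 - (i - k) := by omega
        rw [h2]
        exact congrArg some
          (stepCell_upd α β t1 t2 (i - k) i ht1 h12 (Nat.sub_le _ _) (by omega))

/-- Correctness of the Until Evaluator Machine (with `0 < t1 ≤ t2`): for all
`i ≥ t2 + 1`, the cell at index `t2 + 1` equals `⊤` iff there exists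
`j ∈ [i − 1 − t2 + t1, i − 1]` with `β` true at `j` and `α` true at all
`k ∈ [i − 1 − t2, j)` (i.e. `x^{i−t2−1} ⊨ α U_{[t1,t2]} β`), and equals `⊥` otherwise. -/
theorem until_EM_correct (α β : ℕ → Bool) (t1 t2 : ℕ) (ht1 : 0 < t1) (h12 : t1 ≤ t2)
    (i : ℕ) (hi : t2 + 1 ≤ i) :
    ((run (untilStep α β t1 t2) i)[t2 + 1]? = some Cell.top ↔
      ∃ j, i - 1 - t2 + t1 ≤ j ∧ j ≤ i - 1 ∧ β j = true ∧
        ∀ k, i - 1 - t2 ≤ k → k < j → α k = true) ∧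
    (¬ (∃ j, i - 1 - t2 + t1 ≤ j ∧ j ≤ i - 1 ∧ β j = true ∧
        ∀ k, i - 1 - t2 ≤ k → k < j → α k = true) →
      (run (untilStep α β t1 t2) i)[t2 + 1]? = some Cell.bot) := by
  obtain ⟨m, rfl⟩ : ∃ m, i = m + 1 := ⟨i - 1, by omega⟩
  have hm : t2 ≤ m := by omega
  have hget : (run (untilStep α β t1 t2) (m+1))[t2+1]? =
      some (cellVal α β t1 t2 (m - t2) m) := by
    rw [run, untilStep_getElem?, List.getElem?_cons_succ,
      run_inv α β t1 t2 ht1 h12 m t2 hm le_rfl, Option.map_some,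
      stepCell_gt _ _ t1 t2 (t2+1) _ (by omega) h12]
  have hs : ¬ (AllA α (m - t2) m ∧ m < m - t2 + t2) := fun h => by omega
  simp only [Nat.add_sub_cancel]
  rw [hget]
  constructor
  · by_cases hT : TopP α β t1 (m - t2) m
    · rw [cellVal, if_pos hT]
      exact iff_of_true rfl hT
    · rw [cellVal, if_neg hT, if_neg hs]
      exact iff_of_false (by simp) hT
  · intro hnT
    rw [cellVal, if_neg (show ¬ TopP α β t1 (m - t2) m from hnT), if_neg hs]
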